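/- arXiv:1304.7375 — 6 statements merged into one kernel-verified Lean document; each statement's English description precedes it below -/
import Mathlib

section
/- Let M ≥ 1 be an integer and let r : ℤ × ℤ → ℂ satisfy r(n + M, m + M) = r(n, m) for all n, m ∈ ℤ. Then there exist functions r_0, …, r_{M−1} : ℤ → ℂ such that r(n, m) = ∑_{k=0}^{M−1} r_k(n − m) · exp(2πi·k·n/M) for all n, m ∈ ℤ. -/
open Finset

private lemma sum_exp_aux (M : ℕ) (hM : 0 < M) (a : ℤ) :
    ∑ k : Fin M, Complex.exp (2 * (Real.pi : ℂ) * Complex.I * ((k : ℕ) : ℂ) * (a : ℂ) / (M : ℂ))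
      = if (M : ℤ) ∣ a then (M : ℂ) else 0 := by
  have hMC : (M : ℂ) ≠ 0 := Nat.cast_ne_zero.mpr hM.ne'
  set z : ℂ := Complex.exp (2 * (Real.pi : ℂ) * Complex.I * (a : ℂ) / (M : ℂ)) with hz
  have hzk : ∀ k : ℕ,
      Complex.exp (2 * (Real.pi : ℂ) * Complex.I * (k : ℂ) * (a : ℂ) / (M : ℂ)) = z ^ k := by
    intro k
    rw [hz, ← Complex.exp_nat_mul]
    congr 1
    ring
  have hsum : (∑ k : Fin M,
      Complex.exp (2 * (Real.pi : ℂ) * Complex.I * ((k : ℕ) : ℂ) * (a : ℂ) / (M : ℂ)))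
      = ∑ k ∈ Finset.range M, z ^ k := by
    rw [Fin.sum_univ_eq_sum_range
      (fun k => Complex.exp (2 * (Real.pi : ℂ) * Complex.I * (k : ℂ) * (a : ℂ) / (M : ℂ)))]
    exact Finset.sum_congr rfl fun k _ => hzk k
  rw [hsum]
  by_cases h : (M : ℤ) ∣ a
  · obtain ⟨b, hb⟩ := h
    have hz1 : z = 1 := by
      rw [hz]
      have : 2 * (Real.pi : ℂ) * Complex.I * (a : ℂ) / (M : ℂ)
          = (b : ℂ) * (2 * (Real.pi : ℂ) * Complex.I) := by
        have ha : (a : ℂ) = (b : ℂ) * (M : ℂ) := by push_cast [hb]; ring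
        rw [ha]; field_simp
      rw [this]
      exact Complex.exp_int_mul_two_pi_mul_I b
    rw [if_pos (show (M : ℤ) ∣ a from ⟨b, hb⟩)]
    simp [hz1]
  · have hz1 : z ≠ 1 := by
      intro h1
      rw [hz] at h1
      rw [Complex.exp_eq_one_iff] at h1
      obtain ⟨t, ht⟩ := h1
      have h2pi : (2 * (Real.pi : ℂ) * Complex.I) ≠ 0 := Complex.two_pi_I_ne_zero
      have : (a : ℂ) = (t : ℂ) * (M : ℂ) := by
        field_simp at ht
        have ht' : 2 * (Real.pi : ℂ) * Complex.I * (a : ℂ)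
            = 2 * (Real.pi : ℂ) * Complex.I * ((t : ℂ) * (M : ℂ)) := by
          rw [ht]; ring
        exact mul_left_cancel₀ h2pi ht'
      have : a = t * M := by exact_mod_cast this
      exact h ⟨t, by linarith⟩
    have hzM : z ^ M = 1 := by
      rw [hz, ← Complex.exp_nat_mul]
      have : (M : ℂ) * (2 * (Real.pi : ℂ) * Complex.I * (a : ℂ) / (M : ℂ))
          = (a : ℂ) * (2 * (Real.pi : ℂ) * Complex.I) := by
        field_simp
      rw [this]
      exact Complex.exp_int_mul_two_pi_mul_I a
    rw [geom_sum_eq hz1, hzM, if_neg h]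
    simp

private lemma per_shift (M : ℕ) (r : ℤ × ℤ → ℂ)
    (hper : ∀ n m : ℤ, r (n + (M : ℤ), m + (M : ℤ)) = r (n, m))
    (t n m : ℤ) : r (n + t * M, m + t * M) = r (n, m) := by
  set g : ℤ → ℂ := fun j => r (n - m + j, j) with hg
  have hgp : Function.Periodic g (M : ℤ) := by
    intro x
    have := hper (n - m + x) x
    simpa [hg, add_assoc] using this
  have h1 : g (m + t * M) = g m := (hgp.int_mul t) m
  have h2 : g m = r (n, m) := by simp [hg]
  have h3 : g (m + t * M) = r (n + t * M, m + t * M) := by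
    have : n - m + (m + t * M) = n + t * M := by ring
    simp [hg, this]
  rw [← h2, ← h1, h3]

/-- For `r : ℤ × ℤ → ℂ` jointly periodic with period `M ≥ 1`
(in the sense `r (n + M, m + M) = r (n, m)`), there exist coefficient functions
`c k : ℤ → ℂ`, `k = 0, …, M−1`, with
`r (n, m) = ∑_{k<M} c k (n − m) · exp(2πi k n / M)`. -/
theorem cyclostationary_fourier_series_expansion
    (M : ℕ) (hM : 1 ≤ M) (r : ℤ × ℤ → ℂ)
    (hper : ∀ n m : ℤ, r (n + (M : ℤ), m + (M : ℤ)) = r (n, m)) :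
    ∃ c : Fin M → (ℤ → ℂ), ∀ n m : ℤ,
      r (n, m) = ∑ k : Fin M,
        c k (n - m) *
          Complex.exp (2 * (Real.pi : ℂ) * Complex.I * ((k : ℕ) : ℂ) * (n : ℂ) / (M : ℂ)) := by
  have hMpos : 0 < M := hM
  have hMC : (M : ℂ) ≠ 0 := Nat.cast_ne_zero.mpr hMpos.ne'
  refine ⟨fun k d => (M : ℂ)⁻¹ * ∑ j : Fin M,
      r (d + (j : ℤ), (j : ℤ)) *
        Complex.exp (-(2 * (Real.pi : ℂ) * Complex.I * ((k : ℕ) : ℂ)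
          * (((d + (j : ℤ) : ℤ)) : ℂ) / (M : ℂ))), fun n m => ?_⟩
  -- rewrite each term, combining the exponentials
  have step1 : ∀ k : Fin M,
      ((M : ℂ)⁻¹ * ∑ j : Fin M,
        r (n - m + (j : ℤ), (j : ℤ)) *
          Complex.exp (-(2 * (Real.pi : ℂ) * Complex.I * ((k : ℕ) : ℂ)
            * (((n - m + (j : ℤ) : ℤ)) : ℂ) / (M : ℂ)))) *
        Complex.exp (2 * (Real.pi : ℂ) * Complex.I * ((k : ℕ) : ℂ) * (n : ℂ) / (M : ℂ))
      = (M : ℂ)⁻¹ * ∑ j : Fin M,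
        r (n - m + (j : ℤ), (j : ℤ)) *
          Complex.exp (2 * (Real.pi : ℂ) * Complex.I * ((k : ℕ) : ℂ)
            * (((m - (j : ℤ) : ℤ)) : ℂ) / (M : ℂ)) := by
    intro k
    rw [mul_assoc, Finset.sum_mul]
    congr 1
    refine Finset.sum_congr rfl fun j _ => ?_
    rw [mul_assoc, ← Complex.exp_add]
    congr 2
    push_cast
    field_simp
    ring
  rw [Finset.sum_congr rfl fun k _ => step1 k]
  rw [← Finset.mul_sum, Finset.sum_comm]
  have step2 : ∀ j : Fin M,
      (∑ k : Fin M, r (n - m + (j : ℤ), (j : ℤ)) *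
        Complex.exp (2 * (Real.pi : ℂ) * Complex.I * ((k : ℕ) : ℂ)
          * (((m - (j : ℤ) : ℤ)) : ℂ) / (M : ℂ)))
      = r (n - m + (j : ℤ), (j : ℤ)) * (if (M : ℤ) ∣ (m - (j : ℤ)) then (M : ℂ) else 0) := by
    intro j
    rw [← Finset.mul_sum, sum_exp_aux M hMpos (m - (j : ℤ))]
  rw [Finset.sum_congr rfl fun j _ => step2 j]
  -- identify the unique surviving index
  have hm0 : 0 ≤ m % (M : ℤ) := Int.emod_nonneg m (by exact_mod_cast hMpos.ne')
  have hmlt : m % (M : ℤ) < (M : ℤ) := Int.emod_lt_of_pos m (by exact_mod_cast hMpos)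
  set j0 : Fin M := ⟨(m % (M : ℤ)).toNat, by
    rw [← Nat.cast_lt (α := ℤ), Int.toNat_of_nonneg hm0]; exact hmlt⟩ with hj0
  have hj0v : ((j0 : ℕ) : ℤ) = m % (M : ℤ) := by
    simp [hj0, Int.toNat_of_nonneg hm0]
  have hcond : ∀ j : Fin M, ((M : ℤ) ∣ (m - (j : ℤ))) ↔ j = j0 := by
    intro j
    constructor
    · intro hd
      have h1 : m % (M : ℤ) = (j : ℤ) % (M : ℤ) :=
        Int.emod_eq_emod_iff_emod_sub_eq_zero.mpr (Int.emod_eq_zero_of_dvd hd)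
      have h2 : ((j : ℕ) : ℤ) % (M : ℤ) = ((j : ℕ) : ℤ) := by
        apply Int.emod_eq_of_lt (by positivity)
        exact_mod_cast j.isLt
      have : ((j0 : ℕ) : ℤ) = ((j : ℕ) : ℤ) := by rw [hj0v, h1, h2]
      have : (j0 : ℕ) = (j : ℕ) := by exact_mod_cast this
      exact (Fin.ext this).symm
    · rintro rfl
      rw [hj0v]
      exact Int.dvd_self_sub_of_emod_eq rfl
  have step3 : (∑ j : Fin M, r (n - m + (j : ℤ), (j : ℤ)) *
      (if (M : ℤ) ∣ (m - (j : ℤ)) then (M : ℂ) else 0))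
      = r (n - m + (j0 : ℤ), (j0 : ℤ)) * (M : ℂ) := by
    rw [Finset.sum_congr rfl (fun j _ => by rw [if_congr (hcond j) rfl rfl])]
    rw [Finset.sum_congr rfl (fun j _ => (mul_ite _ _ _ _))]
    simp
  rw [step3]
  have hshift : r (n - m + (j0 : ℤ) + (m / (M : ℤ)) * (M : ℤ),
      (j0 : ℤ) + (m / (M : ℤ)) * (M : ℤ)) = r (n - m + (j0 : ℤ), (j0 : ℤ)) :=
    per_shift M r hper (m / (M : ℤ)) _ _
  have hmeq : ((j0 : ℕ) : ℤ) + (m / (M : ℤ)) * (M : ℤ) = m := by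
    rw [hj0v]
    rw [mul_comm]
    exact Int.emod_add_mul_ediv m (M : ℤ)
  have hneq : n - m + ((j0 : ℕ) : ℤ) + (m / (M : ℤ)) * (M : ℤ) = n := by
    rw [add_assoc, hmeq]; ring
  rw [← hshift, hmeq, hneq]
  field_simp
end

section
/- Let M be a positive integer and N a positive even integer. For every x ∈ ℂ^{MN}, the asymptotic FRESH properizer f is inverted by the map f⁻¹(y) := W_{MN}ᴴ (G_{M,N} W_{MN} y + P_{MN} G_{M,N} S_{M,N}ᵀ conj(W_{MN}) conj(y)); that is, f⁻¹(f(x)) = x. -/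
open Matrix

/-- The centered DFT matrix `W_L`: its `(m,n)` entry, for 1-indexed
`m, n ∈ {1, …, L}`, is `(1/√L) · exp(−2πi (m − c_L)(n − c_L) / L)` with `c_L = (L+1)/2`. -/
noncomputable def cdft (L : ℕ) : Matrix (Fin L) (Fin L) ℂ :=
  Matrix.of fun m n : Fin L =>
    ((1 / Real.sqrt L : ℝ) : ℂ) *
      Complex.exp (-(2 * (Real.pi : ℂ) * Complex.I) *
        (((m.1 : ℂ) + 1) - ((L : ℂ) + 1) / 2) *
        (((n.1 : ℂ) + 1) - ((L : ℂ) + 1) / 2) / (L : ℂ))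

/-- The RSW matrix `G_{M,N}`: the `MN×MN` 0-1 diagonal matrix
`I_M ⊗ [[O_{N/2}, O_{N/2}],[O_{N/2}, I_{N/2}]]`, i.e. the diagonal entry at
(0-based) index `i` is `1` iff `i mod N ≥ N/2`. -/
def rsw (M N : ℕ) : Matrix (Fin (M * N)) (Fin (M * N)) ℂ :=
  Matrix.of fun i j : Fin (M * N) => if i = j ∧ N / 2 ≤ i.1 % N then 1 else 0

/-- The circular-shift matrix `S_{M,N}`: its (0-based) `(i,j)` entry is `1`
iff `j ≡ i + N/2 (mod MN)`. -/
def shiftMat (M N : ℕ) : Matrix (Fin (M * N)) (Fin (M * N)) ℂ :=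
  Matrix.of fun i j : Fin (M * N) => if j.1 = (i.1 + N / 2) % (M * N) then 1 else 0

/-- The backward identity matrix `P_L`: its `(m,n)` entry (1-indexed) is `1`
if `m + n = L + 1` and `0` otherwise. -/
def bkId (L : ℕ) : Matrix (Fin L) (Fin L) ℂ :=
  Matrix.of fun m n : Fin L => if (m.1 + 1) + (n.1 + 1) = L + 1 then 1 else 0

/-- The asymptotic FRESH properizer with parameters `M` and `N`:
`f(x) = W_{MN}ᴴ (G_{M,N} W_{MN} x + S_{M,N} G_{M,N} W_{MN} conj(x))`. -/
noncomputable def fresh (M N : ℕ) (x : Fin (M * N) → ℂ) : Fin (M * N) → ℂ :=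
  Matrix.mulVec (cdft (M * N))ᴴ
    (Matrix.mulVec (rsw M N * cdft (M * N)) x +
      Matrix.mulVec (shiftMat M N * rsw M N * cdft (M * N)) (star x))

/-- The inverse map
`f⁻¹(y) = W_{MN}ᴴ (G_{M,N} W_{MN} y + P_{MN} G_{M,N} S_{M,N}ᵀ conj(W_{MN}) conj(y))`. -/
noncomputable def freshInv (M N : ℕ) (y : Fin (M * N) → ℂ) : Fin (M * N) → ℂ :=
  Matrix.mulVec (cdft (M * N))ᴴ
    (Matrix.mulVec (rsw M N * cdft (M * N)) y +
      Matrix.mulVec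
        (bkId (M * N) * rsw M N * (shiftMat M N)ᵀ * (cdft (M * N)).map (starRingEnd ℂ))
        (star y))


section Aux

lemma star_mulVec' {n : ℕ} (A : Matrix (Fin n) (Fin n) ℂ) (v : Fin n → ℂ) :
    star (A.mulVec v) = (A.map (starRingEnd ℂ)).mulVec (star v) := by
  funext i
  simp only [Pi.star_apply, Matrix.mulVec, dotProduct, star_sum, star_mul',
    Matrix.map_apply, Pi.star_apply]
  rfl

lemma cdft_symm (L : ℕ) : (cdft L)ᵀ = cdft L := by
  ext i j
  simp only [cdft, Matrix.transpose_apply, Matrix.of_apply]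
  congr 1
  ring

lemma cdft_conjTranspose (L : ℕ) : (cdft L)ᴴ = (cdft L).map (starRingEnd ℂ) := by
  ext i j
  simp only [Matrix.conjTranspose_apply, Matrix.map_apply, cdft, Matrix.of_apply]
  congr 1
  · congr 1
    ring

lemma conj_arg (L : ℕ) (a b : ℂ) (ha : (starRingEnd ℂ) a = a) (hb : (starRingEnd ℂ) b = b) :
    (starRingEnd ℂ) (-(2 * (Real.pi : ℂ) * Complex.I) * a * b / L)
      = (2 * (Real.pi : ℂ) * Complex.I) * a * b / L := by
  simp only [map_div₀, _root_.map_mul, map_neg, Complex.conj_I, Complex.conj_ofReal, ha, hb,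
    map_ofNat, Complex.conj_natCast]
  ring

lemma conj_a (L : ℕ) (m : ℕ) :
    (starRingEnd ℂ) (((m : ℂ) + 1) - ((L : ℂ) + 1) / 2) = ((m : ℂ) + 1) - ((L : ℂ) + 1) / 2 := by
  simp [map_sub, map_add, map_div₀, Complex.conj_natCast, map_ofNat]

lemma cdft_conj_mul (L : ℕ) (hL : 0 < L) :
    (cdft L).map (starRingEnd ℂ) * cdft L = 1 := by
  have hLC : (L : ℂ) ≠ 0 := Nat.cast_ne_zero.mpr hL.ne'
  have hs : ((1 / Real.sqrt L : ℝ) : ℂ) * ((1 / Real.sqrt L : ℝ) : ℂ) = 1 / (L : ℂ) := by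
    rw [← Complex.ofReal_mul]
    rw [show (1 / Real.sqrt L) * (1 / Real.sqrt L) = 1 / (Real.sqrt L * Real.sqrt L) by ring,
      Real.mul_self_sqrt (Nat.cast_nonneg L)]
    push_cast
    ring
  ext i j
  rw [Matrix.mul_apply]
  set d : ℂ := (i.1 : ℂ) - (j.1 : ℂ) with hd
  have key : ∀ k : Fin L,
      ((cdft L).map (starRingEnd ℂ)) i k * cdft L k j
        = (1 / (L:ℂ)) * Complex.exp ((2 * (Real.pi : ℂ) * Complex.I) *
            (((k.1 : ℂ) + 1) - ((L : ℂ) + 1) / 2) * d / L) := by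
    intro k
    simp only [Matrix.map_apply, cdft, Matrix.of_apply, _root_.map_mul, Complex.conj_ofReal]
    rw [← Complex.exp_conj, conj_arg L _ _ (conj_a L i.1) (conj_a L k.1)]
    rw [show ((1 / Real.sqrt L : ℝ) : ℂ) * Complex.exp _ *
            (((1 / Real.sqrt L : ℝ) : ℂ) * Complex.exp _)
        = (((1 / Real.sqrt L : ℝ) : ℂ) * ((1 / Real.sqrt L : ℝ) : ℂ)) *
          (Complex.exp ((2 * (Real.pi : ℂ) * Complex.I) *
            (((i.1 : ℂ) + 1) - ((L : ℂ) + 1) / 2) *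
            (((k.1 : ℂ) + 1) - ((L : ℂ) + 1) / 2) / L) *
           Complex.exp (-(2 * (Real.pi : ℂ) * Complex.I) *
            (((k.1 : ℂ) + 1) - ((L : ℂ) + 1) / 2) *
            (((j.1 : ℂ) + 1) - ((L : ℂ) + 1) / 2) / L)) from by ring]
    rw [hs, ← Complex.exp_add]
    congr 1
    rw [hd]
    congr 1
    field_simp
    ring
  rw [Finset.sum_congr rfl (fun k _ => key k)]
  by_cases hij : i = j
  · subst hij
    simp only [hd, sub_self, mul_zero, zero_div, Complex.exp_zero, mul_one]
    rw [Finset.sum_const, Finset.card_univ, Fintype.card_fin, Matrix.one_apply_eq,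
      nsmul_eq_mul]
    field_simp
  · rw [Matrix.one_apply_ne hij]
    set t : ℂ := (2 * (Real.pi : ℂ) * Complex.I) * d / L with ht
    have hfac : ∀ k : Fin L,
        (1 / (L:ℂ)) * Complex.exp ((2 * (Real.pi : ℂ) * Complex.I) *
            (((k.1 : ℂ) + 1) - ((L : ℂ) + 1) / 2) * d / L)
          = ((1 / (L:ℂ)) * Complex.exp ((2 * (Real.pi : ℂ) * Complex.I) *
              ((1:ℂ) - ((L : ℂ) + 1) / 2) * d / L)) * Complex.exp t ^ (k.1) := by
      intro k
      rw [← Complex.exp_nat_mul]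
      conv_rhs => rw [mul_assoc, ← Complex.exp_add]
      congr 2
      rw [ht]
      field_simp
      ring
    rw [Finset.sum_congr rfl (fun k _ => hfac k), ← Finset.mul_sum]
    have hdInt : d = (((i.1 : ℤ) - (j.1 : ℤ) : ℤ) : ℂ) := by
      rw [hd]; push_cast; ring
    have hsum : ∑ k : Fin L, Complex.exp t ^ (k.1 : ℕ) = 0 := by
      have hω1 : Complex.exp t ≠ 1 := by
        intro h
        rw [Complex.exp_eq_one_iff] at h
        obtain ⟨n, hn⟩ := h
        rw [ht] at hn
        have h2 : (2 * (Real.pi:ℂ) * Complex.I) ≠ 0 := by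
          simp [Real.pi_ne_zero, Complex.I_ne_zero, Complex.ofReal_ne_zero]
        have hde : d = (n : ℂ) * L := by
          field_simp at hn
          apply mul_left_cancel₀ h2
          linear_combination (2 * (Real.pi:ℂ) * Complex.I) * hn
        rw [hdInt] at hde
        have hZ : (i.1 : ℤ) - (j.1 : ℤ) = n * L := by
          exact_mod_cast hde
        have hi' : (i.1 : ℤ) < L := by exact_mod_cast i.isLt
        have hj' : (j.1 : ℤ) < L := by exact_mod_cast j.isLt
        have hi0 : (0:ℤ) ≤ (i.1 : ℤ) := Int.natCast_nonneg _
        have hj0 : (0:ℤ) ≤ (j.1 : ℤ) := Int.natCast_nonneg _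
        have hne : (i.1 : ℤ) ≠ (j.1 : ℤ) := by
          intro h; exact hij (Fin.ext (by exact_mod_cast h))
        have hL' : (0:ℤ) < L := by exact_mod_cast hL
        rcases lt_trichotomy n 0 with h | h | h
        · have : n * L ≤ -1 * L := mul_le_mul_of_nonneg_right (by omega) hL'.le
          linarith
        · subst h; simp at hZ; omega
        · have : 1 * L ≤ n * L := mul_le_mul_of_nonneg_right (by omega) hL'.le
          linarith
      have hωL : Complex.exp t ^ L = 1 := by
        rw [← Complex.exp_nat_mul, ht,
          show (L:ℂ) * ((2 * (Real.pi : ℂ) * Complex.I) * d / L)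
              = d * (2 * (Real.pi : ℂ) * Complex.I) from by field_simp,
          hdInt]
        exact Complex.exp_int_mul_two_pi_mul_I _
      rw [Fin.sum_univ_eq_sum_range (fun k => Complex.exp t ^ k) L,
        geom_sum_eq hω1, hωL, sub_self, zero_div]
    rw [hsum, mul_zero]

lemma bkId_eq_perm (L : ℕ) :
    bkId L = (Fin.revPerm (n := L)).toPEquiv.toMatrix := by
  ext i j
  simp only [bkId, Matrix.of_apply, PEquiv.toMatrix_apply, Equiv.toPEquiv_apply,
    Option.mem_some_iff, Fin.revPerm_apply]
  have hi := i.isLt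
  have hj := j.isLt
  by_cases h : i.rev = j
  · simp [← h, Fin.val_rev]
    omega
  · rw [if_neg h, if_neg]
    intro hcon
    apply h
    apply Fin.ext
    rw [Fin.val_rev]
    omega

lemma shiftMat_eq_perm (M N : ℕ) (h2 : N / 2 < M * N) :
    haveI : NeZero (M * N) := ⟨by omega⟩
    shiftMat M N = (Equiv.addRight (⟨N / 2, h2⟩ : Fin (M * N))).toPEquiv.toMatrix := by
  haveI : NeZero (M * N) := ⟨by omega⟩
  ext i j
  simp only [shiftMat, Matrix.of_apply, PEquiv.toMatrix_apply, Equiv.toPEquiv_apply,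
    Option.mem_some_iff, Equiv.coe_addRight]
  have hv : (i + (⟨N / 2, h2⟩ : Fin (M * N))).1 = (i.1 + N / 2) % (M * N) := rfl
  by_cases h : i + (⟨N / 2, h2⟩ : Fin (M * N)) = j
  · simp [← h, hv]
  · rw [if_neg h, if_neg]
    intro hcon
    exact h (Fin.ext (by rw [hv]; exact hcon.symm))

lemma bkId_mul_bkId (L : ℕ) : bkId L * bkId L = 1 := by
  rw [bkId_eq_perm, ← PEquiv.toMatrix_trans, ← Equiv.toPEquiv_trans]
  rw [show (Fin.revPerm (n := L)).trans Fin.revPerm = Equiv.refl _ from by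
    ext k; simp]
  rw [Equiv.toPEquiv_refl, PEquiv.toMatrix_refl]

lemma shiftT_mul_shift (M N : ℕ) (h2 : N / 2 < M * N) :
    (shiftMat M N)ᵀ * shiftMat M N = 1 := by
  haveI : NeZero (M * N) := ⟨by omega⟩
  rw [shiftMat_eq_perm M N h2, ← PEquiv.toMatrix_symm, ← Equiv.toPEquiv_symm,
    ← PEquiv.toMatrix_trans, ← Equiv.toPEquiv_trans, Equiv.symm_trans_self,
    Equiv.toPEquiv_refl, PEquiv.toMatrix_refl]

lemma rsw_eq_diagonal (M N : ℕ) :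
    rsw M N = Matrix.diagonal (fun i : Fin (M*N) => if N / 2 ≤ i.1 % N then (1:ℂ) else 0) := by
  ext i j
  simp only [rsw, Matrix.of_apply, Matrix.diagonal_apply]
  split_ifs with h1 h2 h3 <;> tauto

lemma key_nat (M N q i j : ℕ) (hM : 0 < M) (hq : N = q + q) (hq0 : 0 < q)
    (hi : q ≤ i % N) (hj : q ≤ j % N) (h : j = (i + q) % (M * N)) : False := by
  have hNd : N ∣ M * N := dvd_mul_left N M
  have h1 : j % N = (i + q) % N := by
    rw [h, Nat.mod_mod_of_dvd _ hNd]
  have h2 : (i + q) % N = (i % N + q) % N := by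
    conv_lhs => rw [Nat.add_mod, Nat.mod_eq_of_lt (show q < N by omega)]
  have hrN : i % N < N := Nat.mod_lt _ (by omega)
  have h3 : (i % N + q) % N = i % N + q - N := by
    rw [Nat.mod_eq_sub_mod (by omega), Nat.mod_eq_of_lt (by omega)]
  omega

lemma rsw_shift_rsw (M N : ℕ) (hM : 0 < M) (hN : 0 < N) (hNe : Even N) :
    rsw M N * shiftMat M N * rsw M N = 0 := by
  obtain ⟨q, hq⟩ := hNe
  have hq0 : 0 < q := by omega
  have hq2 : N / 2 = q := by omega
  ext i j
  rw [rsw_eq_diagonal, Matrix.mul_diagonal, Matrix.diagonal_mul, Matrix.zero_apply]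
  by_cases hi : N / 2 ≤ i.1 % N
  · by_cases hj : N / 2 ≤ j.1 % N
    · rw [if_pos hi, if_pos hj]
      have hS : shiftMat M N i j = 0 := by
        simp only [shiftMat, Matrix.of_apply]
        rw [if_neg]
        intro hcon
        exact key_nat M N q i.1 j.1 hM hq hq0 (by omega) (by omega) (by rw [← hq2]; exact hcon)
      rw [hS]; ring
    · rw [if_neg hj]; ring
  · rw [if_neg hi]; ring

lemma rsw_shiftT_rsw (M N : ℕ) (hM : 0 < M) (hN : 0 < N) (hNe : Even N) :
    rsw M N * (shiftMat M N)ᵀ * rsw M N = 0 := by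
  obtain ⟨q, hq⟩ := hNe
  have hq0 : 0 < q := by omega
  have hq2 : N / 2 = q := by omega
  ext i j
  rw [rsw_eq_diagonal, Matrix.mul_diagonal, Matrix.diagonal_mul, Matrix.zero_apply]
  by_cases hi : N / 2 ≤ i.1 % N
  · by_cases hj : N / 2 ≤ j.1 % N
    · rw [if_pos hi, if_pos hj]
      have hS : (shiftMat M N)ᵀ i j = 0 := by
        simp only [shiftMat, Matrix.transpose_apply, Matrix.of_apply]
        rw [if_neg]
        intro hcon
        exact key_nat M N q j.1 i.1 hM hq hq0 (by omega) (by omega) (by rw [← hq2]; exact hcon)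
      rw [hS]; ring
    · rw [if_neg hj]; ring
  · rw [if_neg hi]; ring

lemma rev_mod (M N : ℕ) (hM : 0 < M) (hN : 0 < N) (i : ℕ) (hi : i < M * N) :
    (M * N - (i + 1)) % N = N - 1 - i % N := by
  set a := i / N with ha
  set r := i % N with hr
  have hrN : r < N := Nat.mod_lt _ hN
  have haM : a < M := by
    rw [ha]
    exact Nat.div_lt_of_lt_mul (by rw [mul_comm N M]; exact hi)
  obtain ⟨b, hb⟩ := Nat.exists_eq_add_of_lt haM
  have e1 : M * N = N * a + b * N + N := by rw [hb]; ring
  have e2 : N * a + r = i := Nat.div_add_mod i N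
  have e3 : M * N - (i + 1) = b * N + (N - 1 - r) := by
    set K := M * N
    set A := N * a
    set B := b * N
    omega
  rw [e3, Nat.add_comm, Nat.add_mul_mod_self_right, Nat.mod_eq_of_lt (by omega)]

lemma rsw_mul_rsw (M N : ℕ) : rsw M N * rsw M N = rsw M N := by
  rw [rsw_eq_diagonal, Matrix.diagonal_mul_diagonal]
  ext i j
  rw [Matrix.diagonal_apply, Matrix.diagonal_apply]
  split_ifs <;> norm_num

lemma bkId_rsw_bkId (M N : ℕ) (hM : 0 < M) (hN : 0 < N) (hNe : Even N) :
    bkId (M * N) * rsw M N * bkId (M * N) = 1 - rsw M N := by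
  obtain ⟨q, hq⟩ := hNe
  have hq0 : 0 < q := by omega
  have hq2 : N / 2 = q := by omega
  rw [Matrix.mul_assoc, bkId_eq_perm]
  ext i j
  rw [PEquiv.toMatrix_mul_apply]
  simp only [Equiv.toPEquiv_apply, Fin.revPerm_apply]
  rw [PEquiv.mul_toMatrix_apply]
  rw [← Equiv.toPEquiv_symm]
  simp only [Equiv.toPEquiv_apply]
  have hrev : rsw M N i.rev ((Fin.revPerm (n := M*N)).symm j) = (1 - rsw M N) i j := by
    simp only [rsw, Matrix.of_apply, Fin.revPerm_symm, Fin.revPerm_apply,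
      Matrix.sub_apply, Matrix.one_apply]
    have hi := i.isLt
    have hmod : (M * N - (i.1 + 1)) % N = N - 1 - i.1 % N :=
      rev_mod M N hM hN i.1 hi
    have hrN : i.1 % N < N := Nat.mod_lt _ (by omega)
    by_cases hij : i = j
    · subst hij
      rw [if_pos rfl]
      have : (i.rev = i.rev ∧ N / 2 ≤ i.rev.1 % N) ↔ ¬ (N / 2 ≤ i.1 % N) := by
        rw [Fin.val_rev, hmod]
        constructor
        · rintro ⟨-, h⟩; omega
        · intro h; exact ⟨rfl, by omega⟩
      by_cases hc : N / 2 ≤ i.1 % N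
      · rw [if_neg (by rw [this]; exact fun h => h hc), if_pos ⟨rfl, hc⟩]; ring
      · rw [if_pos (this.mpr hc), if_neg (fun h => hc h.2)]; ring
    · have hrij : ¬ (i.rev = j.rev) := fun h => hij (by
        have := congrArg Fin.rev h
        rwa [Fin.rev_rev, Fin.rev_rev] at this)
      rw [if_neg hij, if_neg (fun h => hrij h.1)]
      simp [hij]
  exact hrev

lemma bkId_mul_cdft (L : ℕ) : bkId L * cdft L = (cdft L).map (starRingEnd ℂ) := by
  rw [bkId_eq_perm]
  ext i j
  rw [PEquiv.toMatrix_mul_apply]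
  simp only [Equiv.toPEquiv_apply, Fin.revPerm_apply]
  simp only [cdft, Matrix.of_apply, Matrix.map_apply, _root_.map_mul, Complex.conj_ofReal]
  rw [← Complex.exp_conj, conj_arg L _ _ (conj_a L i.1) (conj_a L j.1)]
  congr 1
  have hi : i.1 < L := i.isLt
  rw [Fin.val_rev, Nat.cast_sub (by omega : i.1 + 1 ≤ L)]
  push_cast
  ring

end Aux

/-- the asymptotic FRESH properizer is inverted by `freshInv`:
`f⁻¹(f(x)) = x` for every `x ∈ ℂ^{MN}`. -/
theorem freshInv_fresh (M N : ℕ) (hM : 0 < M) (hN : 0 < N) (hNe : Even N)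
    (x : Fin (M * N) → ℂ) :
    freshInv M N (fresh M N x) = x := by
  have hL : 0 < M * N := Nat.mul_pos hM hN
  have hNle : N ≤ M * N := Nat.le_mul_of_pos_left N hM
  have h2 : N / 2 < M * N := by
    have := Nat.div_lt_self hN one_lt_two
    omega
  simp only [fresh, freshInv, cdft_conjTranspose]
  set W := cdft (M * N) with hWdef
  set Wc := W.map (starRingEnd ℂ) with hWcdef
  set G := rsw M N with hGdef
  set S := shiftMat M N with hSdef
  set P := bkId (M * N) with hPdef
  have h1 : Wc * W = 1 := cdft_conj_mul (M * N) hL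
  have h1' : W * Wc = 1 := mul_eq_one_comm.mp h1
  have hPP : P * P = 1 := bkId_mul_bkId (M * N)
  have hStS : Sᵀ * S = 1 := shiftT_mul_shift M N h2
  have hGG : G * G = G := rsw_mul_rsw M N
  have hGSG : G * S * G = 0 := rsw_shift_rsw M N hM hN hNe
  have hGStG : G * Sᵀ * G = 0 := rsw_shiftT_rsw M N hM hN hNe
  have hPGP : P * G * P = 1 - G := bkId_rsw_bkId M N hM hN hNe
  have hPW : P * W = Wc := bkId_mul_cdft (M * N)
  have cWWc : ∀ Z : Matrix (Fin (M*N)) (Fin (M*N)) ℂ, W * (Wc * Z) = Z := fun Z => by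
    rw [← Matrix.mul_assoc, h1', Matrix.one_mul]
  have cWcW : ∀ Z : Matrix (Fin (M*N)) (Fin (M*N)) ℂ, Wc * (W * Z) = Z := fun Z => by
    rw [← Matrix.mul_assoc, h1, Matrix.one_mul]
  have cStS : ∀ Z : Matrix (Fin (M*N)) (Fin (M*N)) ℂ, Sᵀ * (S * Z) = Z := fun Z => by
    rw [← Matrix.mul_assoc, hStS, Matrix.one_mul]
  have cPP : ∀ Z : Matrix (Fin (M*N)) (Fin (M*N)) ℂ, P * (P * Z) = Z := fun Z => by
    rw [← Matrix.mul_assoc, hPP, Matrix.one_mul]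
  have cGG : ∀ Z : Matrix (Fin (M*N)) (Fin (M*N)) ℂ, G * (G * Z) = G * Z := fun Z => by
    rw [← Matrix.mul_assoc, hGG]
  have hPWc : P * Wc = W := by
    rw [← hPW, cPP]
  have hWcc : Wc.map (starRingEnd ℂ) = W := by
    rw [hWcdef, Matrix.map_map]
    rw [show ((starRingEnd ℂ) : ℂ → ℂ) ∘ ((starRingEnd ℂ) : ℂ → ℂ) = id from
      funext fun z => Complex.conj_conj z]
    exact Matrix.map_id W
  have hGc : G.map (starRingEnd ℂ) = G := by
    rw [hGdef]
    ext i j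
    simp only [rsw, Matrix.map_apply, Matrix.of_apply, apply_ite (starRingEnd ℂ),
      _root_.map_one, _root_.map_zero]
  have hSc : S.map (starRingEnd ℂ) = S := by
    rw [hSdef]
    ext i j
    simp only [shiftMat, Matrix.map_apply, Matrix.of_apply, apply_ite (starRingEnd ℂ),
      _root_.map_one, _root_.map_zero]
  have hy : Wc *ᵥ ((G * W) *ᵥ x + (S * G * W) *ᵥ star x)
      = (Wc * (G * W)) *ᵥ x + (Wc * (S * G * W)) *ᵥ star x := by
    rw [Matrix.mulVec_add, Matrix.mulVec_mulVec, Matrix.mulVec_mulVec]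
  rw [hy]
  have hystar : star ((Wc * (G * W)) *ᵥ x + (Wc * (S * G * W)) *ᵥ star x)
      = (W * (G * Wc)) *ᵥ star x + (W * (S * G * Wc)) *ᵥ x := by
    rw [star_add, star_mulVec', star_mulVec', star_star]
    simp only [Matrix.map_mul]
    rw [hWcc, hGc, hSc, ← hWcdef]
  rw [hystar]
  have hGSW : G * (S * (G * W)) = 0 := by
    have e : G * (S * (G * W)) = (G * S * G) * W := by simp only [Matrix.mul_assoc]
    rw [e, hGSG, Matrix.zero_mul]
  have hGStWc : G * (Sᵀ * (G * Wc)) = 0 := by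
    have e : G * (Sᵀ * (G * Wc)) = (G * Sᵀ * G) * Wc := by simp only [Matrix.mul_assoc]
    rw [e, hGStG, Matrix.zero_mul]
  have hPGWc : P * (G * Wc) = W - G * W := by
    calc P * (G * Wc) = P * (G * (P * (P * Wc))) := by rw [cPP]
      _ = (P * G * P) * (P * Wc) := by simp only [Matrix.mul_assoc]
      _ = (1 - G) * W := by rw [hPGP, hPWc]
      _ = W - G * W := by rw [Matrix.sub_mul, Matrix.one_mul]
  simp only [Matrix.mulVec_add, Matrix.mulVec_mulVec, Matrix.mul_assoc]
  simp only [cWWc, cWcW, cStS, cGG]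
  rw [hGSW, hGStWc, hPGWc]
  simp only [Matrix.mul_zero, Matrix.zero_mulVec, Matrix.mul_sub, h1]
  rw [Matrix.sub_mulVec, Matrix.one_mulVec]
  have : Wc * W = 1 := h1
  abel_nf
end

section
/- Let M be a positive integer and N a positive even integer. For every x ∈ ℂ^{MN}, the output of the asymptotic FRESH properizer has the same Euclidean norm as the input: ‖f(x)‖ = ‖x‖. -/
open Matrix

lemma cdft_apply (L : ℕ) (m n : Fin L) :
    cdft L m n = ((1 / Real.sqrt L : ℝ) : ℂ) *
      Complex.exp (-(2 * (Real.pi : ℂ) * Complex.I) *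
        (((m.1 : ℂ) + 1) - ((L : ℂ) + 1) / 2) *
        (((n.1 : ℂ) + 1) - ((L : ℂ) + 1) / 2) / (L : ℂ)) := rfl

lemma cdft_conj (L : ℕ) (m n : Fin L) :
    (starRingEnd ℂ) (cdft L m n) =
    ((1 / Real.sqrt L : ℝ) : ℂ) *
      Complex.exp ((2 * (Real.pi : ℂ) * Complex.I) *
        (((m.1 : ℂ) + 1) - ((L : ℂ) + 1) / 2) *
        (((n.1 : ℂ) + 1) - ((L : ℂ) + 1) / 2) / (L : ℂ)) := by
  simp only [cdft, Matrix.of_apply, _root_.map_mul, Complex.conj_ofReal, ← Complex.exp_conj]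
  congr 1
  simp only [map_div₀, _root_.map_mul, map_sub, map_add, _root_.map_one, map_neg,
    Complex.conj_I, map_ofNat, Complex.conj_natCast, Complex.conj_ofReal]
  ring

lemma cdft_unitary (L : ℕ) (hL : 0 < L) : (cdft L)ᴴ * cdft L = 1 := by
  have hL0 : (L : ℂ) ≠ 0 := Nat.cast_ne_zero.mpr hL.ne'
  have hsq : ((1 / Real.sqrt L : ℝ) : ℂ) * ((1 / Real.sqrt L : ℝ) : ℂ) = 1 / (L : ℂ) := by
    rw [← Complex.ofReal_mul, div_mul_div_comm, one_mul,
      Real.mul_self_sqrt (Nat.cast_nonneg L)]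
    push_cast
    ring
  ext m n
  rw [Matrix.mul_apply, Matrix.one_apply]
  simp only [Matrix.conjTranspose_apply, Complex.star_def]
  by_cases hmn : m = n
  · subst hmn
    rw [if_pos rfl]
    have key : ∀ k : Fin L, (starRingEnd ℂ) (cdft L k m) * cdft L k m = 1 / (L : ℂ) := by
      intro k
      rw [cdft_conj, cdft_apply, mul_mul_mul_comm, hsq, ← Complex.exp_add,
        show (2 * (Real.pi : ℂ) * Complex.I) *
            (((k.1 : ℂ) + 1) - ((L : ℂ) + 1) / 2) * (((m.1 : ℂ) + 1) - ((L : ℂ) + 1) / 2) / (L : ℂ) +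
          -(2 * (Real.pi : ℂ) * Complex.I) *
            (((k.1 : ℂ) + 1) - ((L : ℂ) + 1) / 2) * (((m.1 : ℂ) + 1) - ((L : ℂ) + 1) / 2) / (L : ℂ)
          = 0 by ring, Complex.exp_zero, mul_one]
    rw [Finset.sum_congr rfl fun k _ => key k, Finset.sum_const, Finset.card_univ,
      Fintype.card_fin, nsmul_eq_mul]
    field_simp
  · rw [if_neg hmn]
    set d : ℂ := (m.1 : ℂ) - (n.1 : ℂ) with hd
    set ζ : ℂ := Complex.exp (2 * (Real.pi : ℂ) * Complex.I * d / L) with hζ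
    have key : ∀ k : Fin L, (starRingEnd ℂ) (cdft L k m) * cdft L k n =
        (1 / (L : ℂ)) * Complex.exp ((Real.pi : ℂ) * Complex.I * (1 - L) * d / L) * ζ ^ (k.1 : ℕ) := by
      intro k
      have e1 : (starRingEnd ℂ) (cdft L k m) * cdft L k n =
          (1 / (L : ℂ)) * Complex.exp ((2 * (Real.pi : ℂ) * Complex.I) *
            (((k.1 : ℂ) + 1) - ((L : ℂ) + 1) / 2) * (((m.1 : ℂ) + 1) - ((L : ℂ) + 1) / 2) / (L : ℂ) +
            -(2 * (Real.pi : ℂ) * Complex.I) *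
            (((k.1 : ℂ) + 1) - ((L : ℂ) + 1) / 2) * (((n.1 : ℂ) + 1) - ((L : ℂ) + 1) / 2) / (L : ℂ)) := by
        rw [cdft_conj, cdft_apply, mul_mul_mul_comm, hsq, ← Complex.exp_add]
      have e2 : (2 * (Real.pi : ℂ) * Complex.I) *
            (((k.1 : ℂ) + 1) - ((L : ℂ) + 1) / 2) * (((m.1 : ℂ) + 1) - ((L : ℂ) + 1) / 2) / (L : ℂ) +
            -(2 * (Real.pi : ℂ) * Complex.I) *
            (((k.1 : ℂ) + 1) - ((L : ℂ) + 1) / 2) * (((n.1 : ℂ) + 1) - ((L : ℂ) + 1) / 2) / (L : ℂ)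
          = (Real.pi : ℂ) * Complex.I * (1 - L) * d / L +
            (k.1 : ℂ) * (2 * (Real.pi : ℂ) * Complex.I * d / L) := by
        rw [hd]; field_simp; ring
      rw [e1, e2, Complex.exp_add, Complex.exp_nat_mul, hζ]
      ring
    rw [Finset.sum_congr rfl fun k _ => key k, ← Finset.mul_sum]
    have hζL : ζ ^ L = 1 := by
      rw [hζ, ← Complex.exp_nat_mul]
      rw [show (L : ℂ) * (2 * (Real.pi : ℂ) * Complex.I * d / L) =
          (((m.1 : ℤ) - (n.1 : ℤ) : ℤ) : ℂ) * (2 * (Real.pi : ℂ) * Complex.I) by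
        push_cast [hd]; field_simp]
      exact_mod_cast Complex.exp_int_mul_two_pi_mul_I ((m.1 : ℤ) - (n.1 : ℤ))
    have hζ1 : ζ ≠ 1 := by
      intro h
      rw [hζ, Complex.exp_eq_one_iff] at h
      obtain ⟨t, ht⟩ := h
      have h2 : (2 * (Real.pi : ℂ) * Complex.I) ≠ 0 := by
        simp [Real.pi_ne_zero, Complex.I_ne_zero, Complex.ofReal_ne_zero]
      have h3 : 2 * (Real.pi : ℂ) * Complex.I * (d / L) =
          2 * (Real.pi : ℂ) * Complex.I * (t : ℂ) := by
        rw [← mul_div_assoc, ht]; ring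
      have h4 : d / (L : ℂ) = (t : ℂ) := mul_left_cancel₀ h2 h3
      have hdL : d = (t : ℂ) * L := by
        rw [← h4]; field_simp
      have hint : ((m.1 : ℤ) - n.1 : ℤ) = t * L := by
        have hc : (((m.1 : ℤ) - n.1 : ℤ) : ℂ) = (((t * L : ℤ)) : ℂ) := by
          push_cast
          rw [← hd, hdL]
        exact_mod_cast hc
      have hm : (m.1 : ℤ) < L := by exact_mod_cast m.2
      have hn : (n.1 : ℤ) < L := by exact_mod_cast n.2
      have hlt : |((m.1 : ℤ) - n.1)| < (L : ℤ) := abs_sub_lt_iff.mpr ⟨by omega, by omega⟩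
      have hdvd : (L : ℤ) ∣ ((m.1 : ℤ) - n.1) := ⟨t, by linarith⟩
      have hz := Int.eq_zero_of_abs_lt_dvd hdvd hlt
      exact hmn (Fin.ext (by omega))
    have hsum : ∑ k : Fin L, ζ ^ (k.1 : ℕ) = 0 := by
      rw [Fin.sum_univ_eq_sum_range (fun i => ζ ^ i), geom_sum_eq hζ1, hζL]
      simp
    rw [hsum, mul_zero]

lemma sum_sq_mulVec {n : ℕ} (A : Matrix (Fin n) (Fin n) ℂ) (h : Aᴴ * A = 1)
    (v : Fin n → ℂ) :
    ∑ i, ‖A.mulVec v i‖ ^ 2 = ∑ i, ‖v i‖ ^ 2 := by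
  have e : ∀ w : Fin n → ℂ, star w ⬝ᵥ w = ((∑ i, ‖w i‖ ^ 2 : ℝ) : ℂ) := by
    intro w
    rw [dotProduct, Complex.ofReal_sum]
    refine Finset.sum_congr rfl fun i _ => ?_
    rw [Pi.star_apply, Complex.star_def, ← Complex.normSq_eq_conj_mul_self,
      Complex.normSq_eq_norm_sq, Complex.ofReal_pow]
  have key : star (A.mulVec v) ⬝ᵥ (A.mulVec v) = star v ⬝ᵥ v := by
    rw [Matrix.star_mulVec, Matrix.dotProduct_mulVec, Matrix.vecMul_vecMul, h,
      Matrix.vecMul_one]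
  rw [e, e] at key
  exact_mod_cast key

lemma cdft_mulVec_star (L : ℕ) (hL : 0 < L) (x : Fin L → ℂ) (j : Fin L) :
    (cdft L).mulVec (star x) j =
      star ((cdft L).mulVec x ⟨L - 1 - j.1, by omega⟩) := by
  have hcast : ((L - 1 - j.1 : ℕ) : ℂ) = (L : ℂ) - 1 - (j.1 : ℂ) := by
    have hj := j.2
    have h1 : L - 1 - j.1 = L - (1 + j.1) := by omega
    rw [h1, Nat.cast_sub (by omega : 1 + j.1 ≤ L)]
    push_cast
    ring
  simp only [Matrix.mulVec, dotProduct]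
  rw [star_sum]
  refine Finset.sum_congr rfl fun k _ => ?_
  rw [star_mul', Pi.star_apply]
  congr 1
  rw [Complex.star_def, cdft_conj, cdft_apply]
  congr 1
  rw [hcast]
  ring

lemma rsw_mulVec (M N : ℕ) (w : Fin (M * N) → ℂ) (i : Fin (M * N)) :
    (rsw M N).mulVec w i = if N / 2 ≤ i.1 % N then w i else 0 := by
  classical
  simp only [Matrix.mulVec, dotProduct, rsw, Matrix.of_apply, ite_and]
  rw [Finset.sum_eq_single i]
  · by_cases h : N / 2 ≤ i.1 % N <;> simp [h]
  · intro b _ hb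
    rw [if_neg (Ne.symm hb), zero_mul]
  · simp

lemma shift_mulVec (M N : ℕ) (hMN : 0 < M * N) (w : Fin (M * N) → ℂ) (i : Fin (M * N)) :
    (shiftMat M N).mulVec w i = w ⟨(i.1 + N / 2) % (M * N), Nat.mod_lt _ hMN⟩ := by
  classical
  simp only [Matrix.mulVec, dotProduct, shiftMat, Matrix.of_apply]
  rw [Finset.sum_eq_single (⟨(i.1 + N / 2) % (M * N), Nat.mod_lt _ hMN⟩ : Fin (M * N))]
  · simp
  · intro b _ hb
    rw [if_neg, zero_mul]
    exact fun h => hb (Fin.ext h)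
  · simp

lemma half_shift_mod {N : ℕ} (hN : 0 < N) (hNe : Even N) (i : ℕ) :
    N / 2 ≤ (i + N / 2) % N ↔ ¬ (N / 2 ≤ i % N) := by
  obtain ⟨r, hr⟩ := hNe
  have hr2 : N / 2 = r := by omega
  have hrpos : 0 < r := by omega
  have ha : i % N < N := Nat.mod_lt _ hN
  rw [hr2]
  have hmm : (i + r) % N = (i % N + r) % N := by
    conv_lhs => rw [Nat.add_mod, Nat.mod_eq_of_lt (by omega : r < N)]
  rw [hmm]
  by_cases h : i % N < r
  · rw [Nat.mod_eq_of_lt (by omega)]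
    omega
  · have h1 : (i % N + r) % N = i % N + r - N := by
      rw [Nat.mod_eq_sub_mod (by omega), Nat.mod_eq_of_lt (by omega)]
    omega

lemma rev_mod_s5 {N K : ℕ} (hN : 0 < N) (k : ℕ) (hk : k < N * K) :
    (N * K - 1 - k) % N = N - 1 - k % N := by
  have hs : k % N < N := Nat.mod_lt _ hN
  have hk2 : N * (k / N) + k % N = k := Nat.div_add_mod k N
  have hq : k / N < K := by
    by_contra h
    push_neg at h
    have := Nat.mul_le_mul_left N h
    omega
  have h2 : N * (k / N + 1) ≤ N * K := Nat.mul_le_mul_left N hq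
  have h3 : N * (k / N + 1) = N * (k / N) + N := by ring
  have h4 : N * (K - k / N - 1) = N * K - N * (k / N) - N := by
    rw [Nat.mul_sub, Nat.mul_sub, Nat.mul_one]
  have e : N * K - 1 - k = N * (K - k / N - 1) + (N - 1 - k % N) := by omega
  rw [e, Nat.mul_add_mod]
  exact Nat.mod_eq_of_lt (by omega)

set_option maxHeartbeats 1600000 in
/-- the asymptotic FRESH properizer preserves the Euclidean norm:
`‖f(x)‖ = ‖x‖` for every `x ∈ ℂ^{MN}`. -/
theorem norm_fresh (M N : ℕ) (hM : 0 < M) (hN : 0 < N) (hNe : Even N)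
    (x : EuclideanSpace ℂ (Fin (M * N))) :
    ‖(show EuclideanSpace ℂ (Fin (M * N)) from WithLp.toLp 2 (fresh M N (fun i => x i)))‖ = ‖x‖ := by
  have hMN : 0 < M * N := Nat.mul_pos hM hN
  have hdvd : N ∣ M * N := dvd_mul_left N M
  have hN2 : N / 2 + N / 2 = N := by
    obtain ⟨r, hr⟩ := hNe; omega
  set x' : Fin (M * N) → ℂ := fun i => x i with hx'
  set W := cdft (M * N) with hW
  have hU : Wᴴ * W = 1 := cdft_unitary _ hMN
  have hU' : (Wᴴ)ᴴ * Wᴴ = 1 := by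
    rw [Matrix.conjTranspose_conjTranspose]
    exact mul_eq_one_comm.mp hU
  set y := W.mulVec x' with hy
  set z := W.mulVec (star x') with hz
  set w2 := (rsw M N).mulVec z with hw2
  set σ : Fin (M * N) → Fin (M * N) :=
    fun i => ⟨(i.1 + N / 2) % (M * N), Nat.mod_lt _ hMN⟩ with hσ
  set rev : Fin (M * N) → Fin (M * N) :=
    fun k => ⟨M * N - 1 - k.1, by omega⟩ with hrev
  set φ : Fin (M * N) → Fin (M * N) :=
    fun i => if N / 2 ≤ i.1 % N then i else rev (σ i) with hφ
  have hσmod : ∀ i : Fin (M * N), (σ i).1 % N = (i.1 + N / 2) % N := by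
    intro i
    exact Nat.mod_mod_of_dvd _ hdvd
  have hrevval : ∀ k : Fin (M * N), (rev k).1 % N = N - 1 - k.1 % N := by
    intro k
    show (M * N - 1 - k.1) % N = N - 1 - k.1 % N
    have hk' : k.1 < N * M := lt_of_lt_of_eq k.2 (Nat.mul_comm M N)
    have h := rev_mod_s5 hN k.1 hk'
    rwa [Nat.mul_comm N M] at h
  -- the argument of Wᴴ in fresh
  have c1 : (rsw M N * cdft (M * N)).mulVec x' = (rsw M N).mulVec y := by
    rw [hy, hW, Matrix.mulVec_mulVec]
  have c2 : (shiftMat M N * rsw M N * cdft (M * N)).mulVec (star x')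
      = fun i => w2 (σ i) := by
    funext i
    rw [show shiftMat M N * rsw M N * cdft (M * N)
        = shiftMat M N * (rsw M N * cdft (M * N)) from Matrix.mul_assoc _ _ _,
      ← Matrix.mulVec_mulVec, shift_mulVec M N hMN, hw2, hz, hW, Matrix.mulVec_mulVec]
  have hargeq : fresh M N x' = Wᴴ.mulVec ((rsw M N).mulVec y + fun i => w2 (σ i)) := by
    unfold fresh
    rw [c1, c2, hW]
  -- per-entry description of the argument
  have hvy : ∀ i : Fin (M * N), (rsw M N).mulVec y i + w2 (σ i)
      = if N / 2 ≤ i.1 % N then y i else star (y (rev (σ i))) := by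
    intro i
    rw [rsw_mulVec, hw2, rsw_mulVec]
    by_cases hc : N / 2 ≤ i.1 % N
    · have hnot : ¬ N / 2 ≤ (σ i).1 % N := by
        rw [hσmod]
        exact fun h => (half_shift_mod hN hNe i.1).mp h hc
      rw [if_pos hc, if_pos hc, if_neg hnot, add_zero]
    · have hyes : N / 2 ≤ (σ i).1 % N := by
        rw [hσmod]
        exact (half_shift_mod hN hNe i.1).mpr hc
      rw [if_neg hc, if_neg hc, if_pos hyes, zero_add, hz, hW, cdft_mulVec_star _ hMN]
  -- φ maps the low region into the low region
  have hφlow : ∀ c : Fin (M * N), ¬ N / 2 ≤ c.1 % N → φ c = rev (σ c) := by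
    intro c hc
    rw [hφ]
    simp only [if_neg hc]
  have hφhigh : ∀ c : Fin (M * N), N / 2 ≤ c.1 % N → φ c = c := by
    intro c hc
    rw [hφ]
    simp only [if_pos hc]
  have hA : ∀ c : Fin (M * N), ¬ N / 2 ≤ c.1 % N → ¬ N / 2 ≤ (φ c).1 % N := by
    intro c hc
    have h1 : N / 2 ≤ (σ c).1 % N := by
      rw [hσmod]; exact (half_shift_mod hN hNe c.1).mpr hc
    have h2 : (σ c).1 % N < N := Nat.mod_lt _ hN
    have h3 : (φ c).1 % N = N - 1 - (σ c).1 % N := by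
      rw [hφlow c hc]
      exact hrevval (σ c)
    omega
  have hφbij : Function.Bijective φ := by
    refine Finite.injective_iff_bijective.mp ?_
    intro a b hab
    by_cases ca : N / 2 ≤ a.1 % N <;> by_cases cb : N / 2 ≤ b.1 % N
    · rwa [hφhigh a ca, hφhigh b cb] at hab
    · exfalso
      have h2 := hA b cb
      rw [← hab, hφhigh a ca] at h2
      exact h2 ca
    · exfalso
      have h2 := hA a ca
      rw [hab, hφhigh b cb] at h2
      exact h2 cb
    · rw [hφlow a ca, hφlow b cb] at hab
      have h0 : (rev (σ a)).1 = (rev (σ b)).1 := congrArg Fin.val hab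
      have e1 : (rev (σ a)).1 = M * N - 1 - (σ a).1 := rfl
      have e2 : (rev (σ b)).1 = M * N - 1 - (σ b).1 := rfl
      have l1 := (σ a).2
      have l2 := (σ b).2
      have h1 : (σ a).1 = (σ b).1 := by omega
      have h4 : (a.1 + N / 2) % (M * N) = (b.1 + N / 2) % (M * N) := h1
      have h5 : a.1 % (M * N) = b.1 % (M * N) :=
        Nat.ModEq.add_right_cancel' (N / 2) h4
      have h6 := a.2
      have h7 := b.2
      exact Fin.ext (by rwa [Nat.mod_eq_of_lt h6, Nat.mod_eq_of_lt h7] at h5)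
  -- assemble
  have hsum : ∑ i, ‖fresh M N x' i‖ ^ 2 = ∑ i, ‖x' i‖ ^ 2 := by
    calc ∑ i, ‖fresh M N x' i‖ ^ 2
        = ∑ i, ‖((rsw M N).mulVec y + fun i => w2 (σ i)) i‖ ^ 2 := by
          rw [hargeq]
          exact sum_sq_mulVec _ hU' _
      _ = ∑ i, ‖y (φ i)‖ ^ 2 := by
          refine Finset.sum_congr rfl fun i _ => ?_
          rw [Pi.add_apply, hvy i]
          by_cases hc : N / 2 ≤ i.1 % N
          · rw [if_pos hc, hφhigh i hc]
          · rw [if_neg hc, hφlow i hc, norm_star]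
      _ = ∑ i, ‖y i‖ ^ 2 := Fintype.sum_bijective φ hφbij _ _ (fun i => rfl)
      _ = ∑ i, ‖x' i‖ ^ 2 := sum_sq_mulVec _ hU _
  rw [EuclideanSpace.norm_eq, EuclideanSpace.norm_eq]
  exact congrArg Real.sqrt hsum
end

section
/- Let M be a positive integer and N a positive even integer. Then Ḡ_{M,N} · (1_{2M} ⊗ I_N) · Ḡ_{M,N}ᵀ = 1_{2M} ⊗ I_{N/2}. -/
open Matrix

/-- `Ḡ_{M,N} = [G_{M,N}  S_{M,N}·G_{M,N}]`, an `MN × 2MN` matrix with columns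
indexed by `Fin (MN) ⊕ Fin (MN)`. -/
noncomputable def gbar (M N : ℕ) : Matrix (Fin (M * N)) (Fin (M * N) ⊕ Fin (M * N)) ℂ :=
  Matrix.fromCols (rsw M N) (shiftMat M N * rsw M N)

/-- The natural 0-based index (in `{0, …, 2L−1}`) of an element of `Fin L ⊕ Fin L`. -/
def sidx (L : ℕ) : Fin L ⊕ Fin L → ℕ
  | Sum.inl k => k.1
  | Sum.inr k => L + k.1

/-- The `2MN × 2MN` matrix `1_{2M} ⊗ I_N` (indexed by `Fin (MN) ⊕ Fin (MN)`):
its `(i,j)` entry is `1` exactly when `i ≡ j (mod N)`. -/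
def maskI2 (M N : ℕ) : Matrix (Fin (M * N) ⊕ Fin (M * N)) (Fin (M * N) ⊕ Fin (M * N)) ℂ :=
  Matrix.of fun i j => if sidx (M * N) i % N = sidx (M * N) j % N then 1 else 0

/-- The `2MN × 2MN` matrix `1_{2M} ⊗ P_N` (indexed by `Fin (MN) ⊕ Fin (MN)`):
its `(i,j)` entry is `1` exactly when `(i mod N) + (j mod N) = N − 1`. -/
def maskP2 (M N : ℕ) : Matrix (Fin (M * N) ⊕ Fin (M * N)) (Fin (M * N) ⊕ Fin (M * N)) ℂ :=
  Matrix.of fun i j => if sidx (M * N) i % N + sidx (M * N) j % N + 1 = N then 1 else 0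

/-- The `MN × MN` matrix `1_{2M} ⊗ I_{N/2}`: its `(i,j)` entry is `1` exactly
when `i ≡ j (mod N/2)`. -/
def maskIhalf (M N : ℕ) : Matrix (Fin (M * N)) (Fin (M * N)) ℂ :=
  Matrix.of fun i j : Fin (M * N) => if i.1 % (N / 2) = j.1 % (N / 2) then 1 else 0

/-- the one-hot column index of row `i` of `gbar`. -/
noncomputable def gcol (M N : ℕ) (hM : 0 < M) (hN : 0 < N) (i : Fin (M * N)) :
    Fin (M * N) ⊕ Fin (M * N) :=
  if N / 2 ≤ i.1 % N then Sum.inl i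
  else Sum.inr ⟨(i.1 + N / 2) % (M * N), Nat.mod_lt _ (Nat.mul_pos hM hN)⟩

lemma shift_mod (M N x : ℕ) : ((x + N / 2) % (M * N)) % N = (x % N + N / 2) % N := by
  rw [Nat.mod_mod_of_dvd _ ⟨M, Nat.mul_comm _ _⟩, Nat.mod_add_mod]

lemma gbar_apply (M N : ℕ) (hM : 0 < M) (hN : 0 < N) (hNe : Even N)
    (i : Fin (M * N)) (b : Fin (M * N) ⊕ Fin (M * N)) :
    gbar M N i b = if b = gcol M N hM hN i then 1 else 0 := by
  obtain ⟨h, rfl⟩ : ∃ h, N = h + h := hNe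
  have hh : (h + h) / 2 = h := by omega
  have hpos : 0 < h := by omega
  cases b with
  | inl k =>
    simp only [gbar, fromCols, rsw, of_apply, Sum.elim_inl, Sum.elim_inr, gcol, hh]
    by_cases hp : h ≤ i.1 % (h + h)
    · simp only [hp, if_true]
      by_cases hik : i = k
      · subst hik; simp [hp]
      · rw [if_neg (fun hc => hik hc.1), if_neg (fun he => hik (Sum.inl.inj he).symm)]
    · simp only [hp, if_false]
      have : ¬(i = k ∧ h ≤ i.1 % (h + h)) := fun ⟨_, hc⟩ => hp hc
      simp [this]
  | inr k =>
    have hsi := shift_mod M (h + h) i.1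
    rw [hh] at hsi
    have him : i.1 % (h + h) < h + h := Nat.mod_lt _ hN
    have hst : (shiftMat M (h + h) * rsw M (h + h)) i k
        = if k.1 = (i.1 + h) % (M * (h + h)) ∧ h ≤ k.1 % (h + h) then 1 else 0 := by
      rw [mul_apply]
      simp only [shiftMat, rsw, of_apply, hh]
      rw [Finset.sum_eq_single k]
      · by_cases hk : k.1 = (i.1 + h) % (M * (h + h))
        · simp only [hk, if_true, true_and]
          by_cases hq : h ≤ k.1 % (h + h) <;> simp [hq, hk]
        · simp [hk]
      · intro m _ hm
        have : ¬(m = k ∧ h ≤ m.1 % (h + h)) := fun ⟨he, _⟩ => hm he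
        simp [this]
      · simp
    simp only [gbar, fromCols, of_apply, Sum.elim_inl, Sum.elim_inr, hst, gcol, hh]
    by_cases hp : h ≤ i.1 % (h + h)
    · simp only [hp, if_true]
      have : ¬(k.1 = (i.1 + h) % (M * (h + h)) ∧ h ≤ k.1 % (h + h)) := by
        rintro ⟨hk, hq⟩
        have e1 : k.1 % (h + h) = (i.1 % (h + h) + h) % (h + h) := by rw [hk]; exact hsi
        have l1 : h + h ≤ i.1 % (h + h) + h := by omega
        have l2 : i.1 % (h + h) + h - (h + h) < h + h := by omega
        have e2 : (i.1 % (h + h) + h) % (h + h) = i.1 % (h + h) + h - (h + h) := by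
          rw [Nat.mod_eq_sub_mod l1]; exact Nat.mod_eq_of_lt l2
        omega
      simp only [this, if_false]
      rw [if_neg (fun he => Sum.inr_ne_inl he)]
    · simp only [hp, if_false, Sum.inr.injEq]
      have hke : (k = ⟨(i.1 + h) % (M * (h + h)), Nat.mod_lt _ (Nat.mul_pos hM hN)⟩)
          ↔ k.1 = (i.1 + h) % (M * (h + h)) := by
        constructor
        · intro he; rw [he]
        · intro he; exact Fin.ext he
      by_cases hk : k.1 = (i.1 + h) % (M * (h + h))
      · have hq : h ≤ k.1 % (h + h) := by
          have e1 : k.1 % (h + h) = (i.1 % (h + h) + h) % (h + h) := by rw [hk]; exact hsi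
          have e2 : (i.1 % (h + h) + h) % (h + h) = i.1 % (h + h) + h :=
            Nat.mod_eq_of_lt (by omega)
          omega
        rw [if_pos ⟨hk, hq⟩, if_pos (hke.mpr hk)]
      · rw [if_neg (fun hc => hk hc.1), if_neg (fun hc => hk (hke.mp hc))]

/-- `Ḡ_{M,N} · (1_{2M} ⊗ I_N) · Ḡ_{M,N}ᵀ = 1_{2M} ⊗ I_{N/2}`. -/
theorem gbar_maskI2_gbar_transpose (M N : ℕ) (hM : 0 < M) (hN : 0 < N) (hNe : Even N) :
    gbar M N * maskI2 M N * (gbar M N)ᵀ = maskIhalf M N := by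
  ext i j
  have key : (gbar M N * maskI2 M N * (gbar M N)ᵀ) i j
      = maskI2 M N (gcol M N hM hN i) (gcol M N hM hN j) := by
    rw [mul_apply]
    simp_rw [mul_apply, transpose_apply, gbar_apply M N hM hN hNe,
      ite_mul, mul_ite, one_mul, mul_one, zero_mul, mul_zero]
    simp
  rw [key]
  obtain ⟨h, rfl⟩ : ∃ h, N = h + h := hNe
  have hh : (h + h) / 2 = h := by omega
  have hhpos : 0 < h + h := hN
  have hpos : 0 < h := by omega
  have modsub : ∀ a : ℕ, h ≤ a % (h + h) → a % (h + h) = a % h + h := by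
    intro a ha
    have h1 : a % h = a % (h + h) % h := (Nat.mod_mod_of_dvd _ ⟨2, by ring⟩).symm
    have h2 : a % (h + h) < h + h := Nat.mod_lt _ hhpos
    have h3 : (a % (h + h) - h) % h = a % (h + h) - h := Nat.mod_eq_of_lt (by omega)
    rw [h1, Nat.mod_eq_sub_mod ha, h3]
    omega
  have modlt : ∀ a : ℕ, ¬ h ≤ a % (h + h) → a % (h + h) = a % h := by
    intro a ha
    have h1 : a % h = a % (h + h) % h := (Nat.mod_mod_of_dvd _ ⟨2, by ring⟩).symm
    have h2 : a % (h + h) % h = a % (h + h) := Nat.mod_eq_of_lt (by omega)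
    rw [h1, h2]
  have finr : ∀ a : ℕ, ¬ h ≤ a % (h + h) →
      (M * (h + h) + (a + h) % (M * (h + h))) % (h + h) = a % h + h := by
    intro a ha
    have e0 : ∀ t : ℕ, (M * (h + h) + t) % (h + h) = t % (h + h) := by
      intro t
      rw [Nat.add_comm, Nat.add_mul_mod_self_right]
    rw [e0]
    have e1 := shift_mod M (h + h) a
    rw [hh] at e1
    rw [e1, modlt a ha]
    exact Nat.mod_eq_of_lt (by have := Nat.mod_lt a hpos; omega)
  simp only [maskIhalf, maskI2, gcol, sidx, of_apply, hh]
  by_cases hpi : h ≤ i.1 % (h + h) <;> by_cases hpj : h ≤ j.1 % (h + h) <;>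
    simp only [hpi, hpj, if_true, if_false, sidx]
  · rw [modsub i.1 hpi, modsub j.1 hpj]
    simp
  · rw [modsub i.1 hpi, finr j.1 hpj]
    simp
  · rw [finr i.1 hpi, modsub j.1 hpj]
    simp
  · rw [finr i.1 hpi, finr j.1 hpj]
    simp
end

section
/- Let M be a positive integer and N a positive even integer. Then Ḡ_{M,N} · (1_{2M} ⊗ P_N) · Ḡ_{M,N}ᵀ = O_{MN}, the MN×MN all-zero matrix. -/
open Matrix

lemma gbar_ne_zero_residue {M N : ℕ} {i : Fin (M * N)} {a : Fin (M * N) ⊕ Fin (M * N)}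
    (h : gbar M N i a ≠ 0) : N / 2 ≤ sidx (M * N) a % N := by
  cases a with
  | inl k =>
    rw [gbar, Matrix.fromCols_apply_inl, rsw] at h
    simp only [Matrix.of_apply, ite_ne_right_iff] at h
    obtain ⟨⟨hik, hmod⟩, -⟩ := h
    simpa [sidx, hik] using hmod
  | inr k =>
    rw [gbar, Matrix.fromCols_apply_inr, Matrix.mul_apply] at h
    obtain ⟨m, -, hm⟩ := Finset.exists_ne_zero_of_sum_ne_zero h
    have hr : rsw M N m k ≠ 0 := right_ne_zero_of_mul hm
    rw [rsw] at hr
    simp only [Matrix.of_apply, ite_ne_right_iff] at hr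
    obtain ⟨⟨hmk, hmod⟩, -⟩ := hr
    have : (M * N + k.1) % N = k.1 % N := by
      rw [Nat.add_comm, Nat.add_mul_mod_self_right]
    subst hmk
    simpa [sidx, this] using hmod

/-- `Ḡ_{M,N} · (1_{2M} ⊗ P_N) · Ḡ_{M,N}ᵀ = O_{MN}`. -/
theorem gbar_maskP2_gbar_transpose (M N : ℕ) (hM : 0 < M) (hN : 0 < N) (hNe : Even N) :
    gbar M N * maskP2 M N * (gbar M N)ᵀ = 0 := by
  obtain ⟨h, hh⟩ := hNe
  ext i j
  simp only [Matrix.mul_apply, Matrix.transpose_apply, Matrix.zero_apply]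
  refine Finset.sum_eq_zero fun b _ => ?_
  by_cases hb : gbar M N j b = 0
  · rw [hb, mul_zero]
  have hrb := gbar_ne_zero_residue hb
  rw [mul_eq_zero]; left
  refine Finset.sum_eq_zero fun a _ => ?_
  by_cases ha : gbar M N i a = 0
  · rw [ha, zero_mul]
  have hra := gbar_ne_zero_residue ha
  rw [mul_eq_zero]; right
  rw [maskP2, Matrix.of_apply, if_neg]
  omega
end

section
/- Let M be a positive integer, N a positive even integer, and σ > 0 a real number. Let R be an MN×MN Hermitian positive semidefinite complex matrix and set Σ := R ⊙ (1_{2M} ⊗ I_{N/2}). Then σ²I_{MN} + Σ is invertible and tr( R − 2·Σ(σ²I_{MN} + Σ)⁻¹R + Σ(σ²I_{MN} + Σ)⁻¹(σ²I_{MN} + R)(σ²I_{MN} + Σ)⁻¹Σ ) = tr( Σ − Σ(σ²I_{MN} + Σ)⁻¹Σ ). -/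
open Matrix ComplexOrder

/-- for `σ > 0` and an `MN × MN` Hermitian positive semidefinite
matrix `R`, with `Σ = R ⊙ (1_{2M} ⊗ I_{N/2})`, the matrix `σ²I + Σ` is
invertible and
`tr(R − 2Σ(σ²I+Σ)⁻¹R + Σ(σ²I+Σ)⁻¹(σ²I+R)(σ²I+Σ)⁻¹Σ) = tr(Σ − Σ(σ²I+Σ)⁻¹Σ)`. -/
theorem trace_mse_identity (M N : ℕ) (hM : 0 < M) (hN : 0 < N) (hNe : Even N)
    (σ : ℝ) (hσ : 0 < σ)
    (R : Matrix (Fin (M * N)) (Fin (M * N)) ℂ) (hR : R.PosSemidef) :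
    IsUnit ((σ : ℂ) ^ 2 • (1 : Matrix (Fin (M * N)) (Fin (M * N)) ℂ) +
        Matrix.hadamard R (maskIhalf M N)) ∧
    Matrix.trace (R
        - (2 : ℂ) • (Matrix.hadamard R (maskIhalf M N) *
            ((σ : ℂ) ^ 2 • 1 + Matrix.hadamard R (maskIhalf M N))⁻¹ * R)
        + Matrix.hadamard R (maskIhalf M N) *
            ((σ : ℂ) ^ 2 • 1 + Matrix.hadamard R (maskIhalf M N))⁻¹ *
            ((σ : ℂ) ^ 2 • 1 + R) *
            ((σ : ℂ) ^ 2 • 1 + Matrix.hadamard R (maskIhalf M N))⁻¹ *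
            Matrix.hadamard R (maskIhalf M N))
      = Matrix.trace (Matrix.hadamard R (maskIhalf M N)
        - Matrix.hadamard R (maskIhalf M N) *
            ((σ : ℂ) ^ 2 • 1 + Matrix.hadamard R (maskIhalf M N))⁻¹ *
            Matrix.hadamard R (maskIhalf M N)) := by
  classical
  have hh0 : 0 < N / 2 := by
    obtain ⟨k, hk⟩ := hNe
    omega
  set Sg : Matrix (Fin (M * N)) (Fin (M * N)) ℂ := Matrix.hadamard R (maskIhalf M N) with hSgd
  set S : Matrix (Fin (M * N)) (Fin (M * N)) ℂ := (σ : ℂ) ^ 2 • 1 + Sg with hSdef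
  -- Σm is positive semidefinite
  have hSgpsd : Sg.PosSemidef := by
    set e : ℕ → Fin (M * N) → ℂ := fun r i => if i.1 % (N / 2) = r then 1 else 0 with hedef
    have hse : ∀ r, star (e r) = e r := by
      intro r
      funext i
      by_cases hir : i.1 % (N / 2) = r <;> simp [hedef, Pi.star_apply, hir]
    have hstar : ∀ r, (Matrix.diagonal (e r))ᴴ = Matrix.diagonal (e r) := by
      intro r
      rw [Matrix.diagonal_conjTranspose, hse]
    have key : Sg = ∑ r ∈ Finset.range (N / 2),
        Matrix.diagonal (e r) * R * (Matrix.diagonal (e r))ᴴ := by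
      ext i j
      rw [Matrix.sum_apply]
      have : ∀ r ∈ Finset.range (N / 2),
          (Matrix.diagonal (e r) * R * (Matrix.diagonal (e r))ᴴ) i j
            = if i.1 % (N / 2) = r then (if j.1 % (N / 2) = r then R i j else 0) else 0 := by
        intro r _
        rw [hstar r, Matrix.mul_diagonal, Matrix.diagonal_mul, hedef]
        by_cases hir : i.1 % (N / 2) = r <;> by_cases hjr : j.1 % (N / 2) = r <;>
          simp [hir, hjr]
      rw [Finset.sum_congr rfl this, Finset.sum_ite_eq,
        if_pos (Finset.mem_range.mpr (Nat.mod_lt _ hh0))]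
      by_cases hij : i.1 % (N / 2) = j.1 % (N / 2)
      · rw [if_pos hij.symm]
        simp [hSgd, Matrix.hadamard_apply, maskIhalf, hij]
      · rw [if_neg (fun hc => hij hc.symm)]
        simp [hSgd, Matrix.hadamard_apply, maskIhalf, hij]
    rw [key]
    refine Finset.sum_induction _ _ (fun a b ha hb => ha.add hb) Matrix.PosSemidef.zero ?_
    intro r _
    exact hR.mul_mul_conjTranspose_same _
  -- S is positive definite, hence a unit
  have hSpd : S.PosDef := by
    have h1 : ((σ : ℂ) ^ 2 • (1 : Matrix (Fin (M * N)) (Fin (M * N)) ℂ)).PosDef := by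
      rw [Matrix.smul_one_eq_diagonal]
      refine Matrix.posDef_diagonal_iff.mpr fun i => ?_
      have h2 : (0 : ℝ) < σ ^ 2 := pow_pos hσ 2
      exact_mod_cast Complex.zero_lt_real.mpr h2
    exact h1.add_posSemidef hSgpsd
  have hSu : IsUnit S := hSpd.isUnit
  refine ⟨hSu, ?_⟩
  have hdet : IsUnit S.det := hSpd.det_pos.ne'.isUnit
  set P : Matrix (Fin (M * N)) (Fin (M * N)) ℂ := S⁻¹ with hPdef
  have hPS : P * S = 1 := Matrix.nonsing_inv_mul S hdet
  have hSP : S * P = 1 := Matrix.mul_nonsing_inv S hdet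
  -- support facts
  have hsuppSg : ∀ i j : Fin (M * N), i.1 % (N / 2) ≠ j.1 % (N / 2) → Sg i j = 0 := by
    intro i j hij
    simp [hSgd, Matrix.hadamard_apply, maskIhalf, hij]
  have hsuppS : ∀ i j : Fin (M * N), i.1 % (N / 2) ≠ j.1 % (N / 2) → S i j = 0 := by
    intro i j hij
    have hne : i ≠ j := fun hc => hij (by rw [hc])
    simp [hSdef, Matrix.add_apply, Matrix.smul_apply, Matrix.one_apply, hne,
      hsuppSg i j hij]
  set d : Fin (M * N) → ℂ := fun i => ((i.1 % (N / 2) : ℕ) : ℂ) with hddef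
  set D : Matrix (Fin (M * N)) (Fin (M * N)) ℂ := Matrix.diagonal d with hDdef
  have hDS : D * S = S * D := by
    ext i j
    rw [hDdef, Matrix.diagonal_mul, Matrix.mul_diagonal]
    by_cases hij : i.1 % (N / 2) = j.1 % (N / 2)
    · have : d i = d j := by rw [hddef]; simp only; rw [hij]
      rw [this, mul_comm]
    · rw [hsuppS i j hij, mul_zero, zero_mul]
  have hDP : D * P = P * D :=
    calc D * P = (P * S) * D * P := by rw [hPS, one_mul]
      _ = P * (S * D) * P := by rw [mul_assoc P S D]
      _ = P * (D * S) * P := by rw [hDS]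
      _ = P * D * (S * P) := by rw [← mul_assoc P D S, mul_assoc (P * D) S P]
      _ = P * D := by rw [hSP, mul_one]
  have hsuppP : ∀ i j : Fin (M * N), i.1 % (N / 2) ≠ j.1 % (N / 2) → P i j = 0 := by
    intro i j hij
    have he := congrFun (congrFun hDP i) j
    rw [hDdef, Matrix.diagonal_mul, Matrix.mul_diagonal] at he
    have hdne : d i ≠ d j := by
      rw [hddef]
      exact fun hc => hij (Nat.cast_injective hc)
    have hz : (d i - d j) * P i j = 0 := by rw [sub_mul, he, mul_comm, sub_self]
    rcases mul_eq_zero.mp hz with hc | hc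
    · exact absurd (sub_eq_zero.mp hc) hdne
    · exact hc
  have hsuppMul : ∀ (A B : Matrix (Fin (M * N)) (Fin (M * N)) ℂ),
      (∀ i j : Fin (M * N), i.1 % (N / 2) ≠ j.1 % (N / 2) → A i j = 0) →
      (∀ i j : Fin (M * N), i.1 % (N / 2) ≠ j.1 % (N / 2) → B i j = 0) →
      (∀ i j : Fin (M * N), i.1 % (N / 2) ≠ j.1 % (N / 2) → (A * B) i j = 0) := by
    intro A B hA' hB' i j hij
    rw [Matrix.mul_apply]
    refine Finset.sum_eq_zero fun k _ => ?_
    by_cases hik : i.1 % (N / 2) = k.1 % (N / 2)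
    · rw [hB' k j (fun hc => hij (hik.trans hc)), mul_zero]
    · rw [hA' i k hik, zero_mul]
  -- key trace lemma
  have htr : ∀ (B : Matrix (Fin (M * N)) (Fin (M * N)) ℂ),
      (∀ i j : Fin (M * N), i.1 % (N / 2) ≠ j.1 % (N / 2) → B i j = 0) →
      Matrix.trace (B * R) = Matrix.trace (B * Sg) := by
    intro B hB'
    simp only [Matrix.trace, Matrix.diag, Matrix.mul_apply]
    refine Finset.sum_congr rfl fun i _ => Finset.sum_congr rfl fun j _ => ?_
    by_cases hij : i.1 % (N / 2) = j.1 % (N / 2)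
    · simp [hSgd, Matrix.hadamard_apply, maskIhalf, hij.symm]
    · rw [hB' i j hij, zero_mul, zero_mul]
  have htrRSg : Matrix.trace R = Matrix.trace Sg := by
    simp [Matrix.trace, Matrix.diag, hSgd, Matrix.hadamard_apply, maskIhalf]
  set X : Matrix (Fin (M * N)) (Fin (M * N)) ℂ := P * Sg * Sg * P with hXdef
  have hsuppX : ∀ i j : Fin (M * N), i.1 % (N / 2) ≠ j.1 % (N / 2) → X i j = 0 :=
    hsuppMul _ _ (hsuppMul _ _ (hsuppMul _ _ hsuppP hsuppSg) hsuppSg) hsuppP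
  have t1 : Matrix.trace (Sg * P * R) = Matrix.trace (Sg * P * Sg) :=
    htr _ (hsuppMul _ _ hsuppSg hsuppP)
  have c1 : Matrix.trace (Sg * P * R * P * Sg) = Matrix.trace (X * R) := by
    rw [mul_assoc (Sg * P * R) P Sg, Matrix.trace_mul_comm (Sg * P * R) (P * Sg),
      ← mul_assoc (P * Sg) (Sg * P) R, ← mul_assoc (P * Sg) Sg P]
  have c2 : Matrix.trace (X * R) = Matrix.trace (X * Sg) := htr _ hsuppX
  have c3 : Matrix.trace (Sg * P * P * Sg) = Matrix.trace X := by
    rw [mul_assoc (Sg * P) P Sg, Matrix.trace_mul_comm (Sg * P) (P * Sg),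
      ← mul_assoc (P * Sg) Sg P]
  have mkey : (σ : ℂ) ^ 2 • X + X * Sg = P * Sg * Sg := by
    have hXS : X * S = P * Sg * Sg := by
      rw [hXdef, mul_assoc (P * Sg * Sg) P S, hPS, mul_one]
    calc (σ : ℂ) ^ 2 • X + X * Sg = X * ((σ : ℂ) ^ 2 • 1) + X * Sg := by
          rw [Matrix.mul_smul, mul_one]
      _ = X * S := by rw [← mul_add, ← hSdef]
      _ = P * Sg * Sg := hXS
  have tX : Matrix.trace (P * Sg * Sg) = Matrix.trace (Sg * P * Sg) := by
    rw [Matrix.trace_mul_comm (P * Sg) Sg, ← mul_assoc Sg P Sg]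
  have middle : Matrix.trace (Sg * P * ((σ : ℂ) ^ 2 • 1 + R) * P * Sg)
      = Matrix.trace (Sg * P * Sg) := by
    have expand : Sg * P * ((σ : ℂ) ^ 2 • 1 + R) * P * Sg
        = (σ : ℂ) ^ 2 • (Sg * P * P * Sg) + Sg * P * R * P * Sg := by
      rw [mul_add, add_mul, add_mul, Matrix.mul_smul, mul_one, Matrix.smul_mul,
        Matrix.smul_mul]
    rw [expand, Matrix.trace_add, Matrix.trace_smul, c3, c1, c2,
      ← Matrix.trace_smul, ← Matrix.trace_add, mkey, tX]
  rw [Matrix.trace_add, Matrix.trace_sub, Matrix.trace_smul, Matrix.trace_sub,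
    htrRSg, t1, middle]
  simp only [smul_eq_mul]
  ring
end
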